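/- Let ω, η ∈ ℂ, let m ≥ 2 be an integer, let ε ∈ {1, −1} ⊆ ℂ, let σ : ℂ → ℂ, and let Ψ ∈ ℂ. Assume: (i) σ(ω/m + ω) = ε · σ(ω/m) · exp(η·(ω/m + ω/2)); (ii) σ((m+1)·(ω/m)) = (−1)^m · σ(ω/m)^((m+1)²) · Ψ; (iii) σ(ω/m) ≠ 0. Then Ψ ≠ 0 and (σ(ω/m) · exp(−η·ω/(2m²)))^(m(m+2)) = ε · (−1)^m / Ψ. -/
import Mathlib


open Complex

theorem sigma_torsion_value (ω η : ℂ) (m : ℕ) (hm : 2 ≤ m) (ε : ℂ)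
    (hε : ε = 1 ∨ ε = -1) (σ : ℂ → ℂ) (Ψ : ℂ)
    (h1 : σ (ω / m + ω) = ε * σ (ω / m) * Complex.exp (η * (ω / m + ω / 2)))
    (h2 : σ ((m + 1 : ℂ) * (ω / m)) = (-1 : ℂ) ^ m * σ (ω / m) ^ ((m + 1) ^ 2) * Ψ)
    (h3 : σ (ω / m) ≠ 0) :
    Ψ ≠ 0 ∧
      (σ (ω / m) * Complex.exp (-η * ω / (2 * (m : ℂ) ^ 2))) ^ (m * (m + 2)) =
        ε * (-1 : ℂ) ^ m / Ψ := by
  have hm0 : (m : ℂ) ≠ 0 := Nat.cast_ne_zero.mpr (by omega)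
  have hkey : (m + 1 : ℂ) * (ω / m) = ω / m + ω := by field_simp; ring
  have heq : ε * σ (ω / m) * Complex.exp (η * (ω / m + ω / 2)) =
      (-1 : ℂ) ^ m * σ (ω / m) ^ ((m + 1) ^ 2) * Ψ := by
    rw [← h1, ← h2, hkey]
  have hε0 : ε ≠ 0 := by rcases hε with h | h <;> simp [h]
  have hΨ : Ψ ≠ 0 := by
    intro h
    rw [h, mul_zero] at heq
    exact (mul_ne_zero (mul_ne_zero hε0 h3) (Complex.exp_ne_zero _)) heq
  refine ⟨hΨ, ?_⟩
  have hC : ((-1 : ℂ) ^ m * σ (ω / m) ^ ((m + 1) ^ 2)) ≠ 0 :=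
    mul_ne_zero (pow_ne_zero _ (by norm_num)) (pow_ne_zero _ h3)
  rw [eq_div_iff hΨ]
  apply mul_right_cancel₀ hC
  have hE : Complex.exp (-η * ω / (2 * (m : ℂ) ^ 2)) ^ (m * (m + 2)) *
      Complex.exp (η * (ω / m + ω / 2)) = 1 := by
    rw [← Complex.exp_nat_mul, ← Complex.exp_add]
    have h0 : ((m * (m + 2) : ℕ) : ℂ) * (-η * ω / (2 * (m : ℂ) ^ 2)) +
        η * (ω / m + ω / 2) = 0 := by
      push_cast
      field_simp
      ring
    rw [h0, Complex.exp_zero]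
  have hS : σ (ω / m) ^ (m * (m + 2)) * σ (ω / m) = σ (ω / m) ^ ((m + 1) ^ 2) := by
    rw [← pow_succ]
    congr 1
    ring
  have hN : ((-1 : ℂ) ^ m) * ((-1 : ℂ) ^ m) = 1 := by
    rw [← pow_add, ← two_mul, pow_mul]
    norm_num
  calc (σ (ω / m) * Complex.exp (-η * ω / (2 * (m : ℂ) ^ 2))) ^ (m * (m + 2)) * Ψ *
        ((-1 : ℂ) ^ m * σ (ω / m) ^ ((m + 1) ^ 2))
      = (σ (ω / m) ^ (m * (m + 2)) *
          Complex.exp (-η * ω / (2 * (m : ℂ) ^ 2)) ^ (m * (m + 2))) *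
        ((-1 : ℂ) ^ m * σ (ω / m) ^ ((m + 1) ^ 2) * Ψ) := by rw [mul_pow]; ring
    _ = (σ (ω / m) ^ (m * (m + 2)) *
          Complex.exp (-η * ω / (2 * (m : ℂ) ^ 2)) ^ (m * (m + 2))) *
        (ε * σ (ω / m) * Complex.exp (η * (ω / m + ω / 2))) := by rw [heq]
    _ = ε * (σ (ω / m) ^ (m * (m + 2)) * σ (ω / m)) *
        (Complex.exp (-η * ω / (2 * (m : ℂ) ^ 2)) ^ (m * (m + 2)) *
          Complex.exp (η * (ω / m + ω / 2))) := by ring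
    _ = ε * σ (ω / m) ^ ((m + 1) ^ 2) := by rw [hS, hE, mul_one]
    _ = ε * (-1 : ℂ) ^ m * ((-1 : ℂ) ^ m * σ (ω / m) ^ ((m + 1) ^ 2)) := by
        rw [mul_assoc ε, ← mul_assoc ((-1 : ℂ) ^ m), hN, one_mul]
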